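/- arXiv:1910.01594 — 3 statements merged into one kernel-verified Lean document; each statement's English description precedes it below -/
import Mathlib

section
/- Let (a_k)_{k≥0} be a sequence of nonnegative real numbers satisfying a_{k+1} ≤ a_k^2 + b for all k ≥ 0, where 0 ≤ a_0 < 1/2 and 0 < b < 1/4. Then for every k ≥ 0, a_k ≤ a_0^{2^k} + (2 + 1/(1 − 2 a_0)) · b. -/
theorem b_sequence_lemma (a : ℕ → ℝ) (b : ℝ)
    (ha : ∀ k, 0 ≤ a k)
    (hrec : ∀ k, a (k + 1) ≤ (a k) ^ 2 + b)
    (ha0 : a 0 < 1 / 2) (hb0 : 0 < b) (hb1 : b < 1 / 4) :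
    ∀ k, a k ≤ (a 0) ^ (2 ^ k) + (2 + 1 / (1 - 2 * a 0)) * b := by
  have ha00 : 0 ≤ a 0 := ha 0
  set s : ℝ := 1 - 2 * a 0 with hs
  have hs0 : 0 < s := by simp only [hs]; linarith
  have hs1 : s ≤ 1 := by simp only [hs]; linarith
  -- invariant: a k ≤ max (a 0) (2 b)
  have hM : ∀ k, a k ≤ max (a 0) (2 * b) := by
    intro k
    induction k with
    | zero => exact le_max_left _ _
    | succ n ih =>
      rcases le_total (a 0) (2 * b) with h | h
      · have hn : a n ≤ 2 * b := le_trans ih (by simp [max_eq_right h])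
        have : a (n + 1) ≤ 2 * b := by
          have := hrec n
          nlinarith [ha n]
        exact le_trans this (le_max_right _ _)
      · have hn : a n ≤ a 0 := le_trans ih (by simp [max_eq_left h])
        have : a (n + 1) ≤ a 0 := by
          have := hrec n
          nlinarith [ha n]
        exact le_trans this (le_max_left _ _)
  intro k
  have hpow_nonneg : (0:ℝ) ≤ (a 0) ^ (2 ^ k) := pow_nonneg ha00 _
  have hsinv : 0 < 1 / s := by positivity
  rcases le_total (a 0) (2 * b) with h | h
  · -- trivial case: a k ≤ 2 b ≤ (2 + 1/s) b
    have hk : a k ≤ 2 * b := le_trans (hM k) (by simp [max_eq_right h])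
    nlinarith
  · -- main case: a 0 ≥ 2 b
    have hA : ∀ n, a n ≤ a 0 := fun n => le_trans (hM n) (by simp [max_eq_left h])
    have ha01 : a 0 ≤ 1 := by linarith
    have hd : ∀ n, a n - (a 0) ^ (2 ^ n) ≤ b / s := by
      intro n
      induction n with
      | zero =>
        simp only [pow_zero, pow_one]
        have : 0 ≤ b / s := le_of_lt (by positivity)
        linarith
      | succ n ih =>
        have hP : (a 0) ^ (2 ^ n) ≤ a 0 :=
          pow_le_of_le_one ha00 ha01 (Nat.two_pow_pos n).ne'
        have hPnn : (0:ℝ) ≤ (a 0) ^ (2 ^ n) := pow_nonneg ha00 _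
        have hsq : ((a 0) ^ (2 ^ n)) ^ 2 = (a 0) ^ (2 ^ (n + 1)) := by
          rw [← pow_mul, pow_succ]
        have hbsnn : 0 ≤ b / s := le_of_lt (by positivity)
        rcases le_total (a n - (a 0) ^ (2 ^ n)) 0 with hneg | hpos
        · -- a n ≤ a0^(2^n): then a (n+1) ≤ a0^(2^(n+1)) + b ≤ ... + b/s
          have h1 : a n ^ 2 ≤ ((a 0) ^ (2 ^ n)) ^ 2 := by
            nlinarith [ha n]
          have h2 : b ≤ b / s := by
            rw [le_div_iff₀ hs0]; nlinarith
          have := hrec n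
          linarith [hsq ▸ h1]
        · -- 0 ≤ d n ≤ b/s: a(n+1) - a0^(2^(n+1)) ≤ 2 a0 * (b/s) + b = b/s
          have hfac : a n + (a 0) ^ (2 ^ n) ≤ 2 * a 0 := by
            linarith [hA n]
          have hfacnn : 0 ≤ a n + (a 0) ^ (2 ^ n) := by linarith [ha n]
          have hprod : (a n + (a 0) ^ (2 ^ n)) * (a n - (a 0) ^ (2 ^ n)) ≤
              (2 * a 0) * (b / s) :=
            mul_le_mul hfac ih hpos (by linarith)
          have halg : a n ^ 2 - ((a 0) ^ (2 ^ n)) ^ 2 =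
              (a n + (a 0) ^ (2 ^ n)) * (a n - (a 0) ^ (2 ^ n)) := by ring
          have hfix : (2 * a 0) * (b / s) + b = b / s := by
            field_simp
            ring
          have := hrec n
          nlinarith [hsq ▸ (halg ▸ hprod)]
    have hdk := hd k
    have hbs : b / s ≤ (2 + 1 / s) * b := by
      have : (2 + 1 / s) * b = 2 * b + b / s := by ring
      linarith
    linarith
end

section
/- Let b be a real number with 0 < b < 1/4 and set α0 = 2b/(1 + √(1 − 4b)). Let (A_k)_{k≥0} satisfy A_{k+1} = A_k^2 + b with α0 ≤ A_0 < 1/2, and write a_0 = A_0. Then for every k ≥ 0, A_k ≤ a_0^{2^k} + ((1 − (2 a_0)^k)/(1 − 2 a_0))·b. -/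
theorem quadratic_seq_estimate (b : ℝ) (hb0 : 0 < b) (hb1 : b < 1 / 4)
    (A : ℕ → ℝ) (hrec : ∀ k, A (k + 1) = (A k) ^ 2 + b)
    (h0 : 2 * b / (1 + Real.sqrt (1 - 4 * b)) ≤ A 0) (h1 : A 0 < 1 / 2) :
    ∀ k, A k ≤ (A 0) ^ (2 ^ k) + ((1 - (2 * A 0) ^ k) / (1 - 2 * A 0)) * b := by
  set a := A 0 with ha
  set s := Real.sqrt (1 - 4 * b) with hs
  have hs0 : 0 ≤ s := Real.sqrt_nonneg _
  have hs2 : s ^ 2 = 1 - 4 * b := Real.sq_sqrt (by linarith)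
  have h1s : (0:ℝ) < 1 + s := by linarith
  have ha0 : 0 < a := lt_of_lt_of_le (div_pos (by linarith) h1s) h0
  have hab : 2 * b ≤ a * (1 + s) := by
    rw [div_le_iff₀ h1s] at h0; linarith
  have hfac : 0 ≤ 2 * a - 1 + s := by nlinarith
  have hkey : b ≤ a - a ^ 2 := by
    nlinarith [mul_nonneg hfac (show (0:ℝ) ≤ 1 + s - 2 * a by linarith)]
  have hpos : ∀ k, 0 < A k := by
    intro k
    cases k with
    | zero => exact ha0
    | succ n => rw [hrec]; positivity
  have hlea : ∀ k, A k ≤ a := by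
    intro k
    induction k with
    | zero => exact le_refl a
    | succ n ih => rw [hrec]; nlinarith [hpos n]
  intro k
  induction k with
  | zero => simp; exact le_of_eq ha.symm
  | succ n ih =>
    have hc1 : 2 * a < 1 := by linarith
    have hc0 : 0 < 2 * a := by linarith
    have hden : 0 < 1 - 2 * a := by linarith
    have hSn : 0 ≤ (1 - (2*a)^n) / (1 - 2*a) := by
      apply div_nonneg _ hden.le
      have := pow_le_one₀ hc0.le hc1.le (n := n)
      linarith
    have hSrec : (1 - (2*a)^(n+1)) / (1 - 2*a) = 1 + 2*a * ((1 - (2*a)^n) / (1 - 2*a)) := by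
      field_simp
      ring
    have htid : a ^ (2^(n+1)) = (a ^ (2^n))^2 := by
      rw [← pow_mul, ← pow_succ]
    by_cases hcase : a ≤ (1 - (2*a)^(n+1)) / (1 - 2*a) * b
    · have h2 := hlea (n+1)
      have hp : 0 < a ^ (2^(n+1)) := pow_pos ha0 _
      linarith
    · push_neg at hcase
      have hpowmono : (2*a)^(n+1) ≤ (2*a)^n :=
        pow_le_pow_of_le_one hc0.le hc1.le (Nat.le_succ n)
      have hSmono : (1 - (2*a)^n) / (1 - 2*a) ≤ (1 - (2*a)^(n+1)) / (1 - 2*a) :=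
        (div_le_div_iff_of_pos_right hden).mpr (by linarith)
      have hSnb : (1 - (2*a)^n) / (1 - 2*a) * b < a :=
        lt_of_le_of_lt (mul_le_mul_of_nonneg_right hSmono hb0.le) hcase
      -- key inequality: 2 * a^(2^n) + S_n * b ≤ 2 * a
      have hkey2 : 2 * a ^ (2^n) + (1 - (2*a)^n) / (1 - 2*a) * b ≤ 2 * a := by
        cases n with
        | zero => simp
        | succ m =>
          have h2le : 2 ≤ 2 ^ (m+1) := by
            calc 2 = 2^1 := rfl
            _ ≤ 2^(m+1) := Nat.pow_le_pow_right (by norm_num) (by omega)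
          have hple : a ^ (2^(m+1)) ≤ a ^ 2 :=
            pow_le_pow_of_le_one ha0.le (by linarith) h2le
          nlinarith
      have hAn := hpos n
      rw [hrec, htid, hSrec]
      have hsum0 : 0 ≤ a ^ (2^n) + (1 - (2*a)^n) / (1 - 2*a) * b + A n := by
        have : 0 < a ^ (2^n) := pow_pos ha0 _
        have := mul_nonneg hSn hb0.le
        linarith
      nlinarith [mul_nonneg (sub_nonneg.2 ih) hsum0,
        mul_nonneg (mul_nonneg hSn hb0.le)
          (show (0:ℝ) ≤ 2*a - 2*a^(2^n) - (1 - (2*a)^n) / (1 - 2*a) * b by linarith)]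
end

section
/- Let (e_k)_{k≥0} be a sequence of nonnegative real numbers and let c4 > 0, c5 > 0, h > 0 be such that c4·e_{k+1} ≤ c5·h^2 + (c4·e_k)^2 for all k ≥ 0. If c4·e_0 < 1/2 and c5·h^2 < 1/4, then for every k ≥ 0, c4·e_k ≤ (c4·e_0)^{2^k} + c5·(3 + (2·c4·e_0)/(1 − 2·c4·e_0))·h^2. -/
private def useq (a0 b : ℝ) : ℕ → ℝ
  | 0 => a0
  | k + 1 => b + (useq a0 b k) ^ 2

private lemma useq_nonneg (a0 b : ℝ) (ha0 : 0 ≤ a0) (hb0 : 0 ≤ b) :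
    ∀ k, 0 ≤ useq a0 b k := by
  intro k
  induction k with
  | zero => exact ha0
  | succ n ih =>
    have := sq_nonneg (useq a0 b n)
    simp only [useq]
    nlinarith

private lemma useq_lower (a0 b : ℝ) (ha0 : 0 ≤ a0) (hb0 : 0 ≤ b) :
    ∀ k, a0 ^ (2 ^ k) ≤ useq a0 b k := by
  intro k
  induction k with
  | zero => simp [useq]
  | succ n ih =>
    have h1 : a0 ^ (2 ^ (n + 1)) = (a0 ^ (2 ^ n)) ^ 2 := by
      rw [← pow_mul, pow_succ]
    have h2 : (a0 ^ (2 ^ n)) ^ 2 ≤ (useq a0 b n) ^ 2 :=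
      pow_le_pow_left₀ (pow_nonneg ha0 _) ih 2
    simp only [useq]
    linarith

private lemma useq_bound (a0 b : ℝ) (ha0 : 0 ≤ a0) (hb0 : 0 < b)
    (h0 : a0 < 1 / 2) (hb : b < 1 / 4) :
    ∀ k, useq a0 b k ≤ a0 ^ (2 ^ k) + (3 + 2 * a0 / (1 - 2 * a0)) * b := by
  have ht : 0 < 1 - 2 * a0 := by linarith
  set s := Real.sqrt (1 - 4 * b) with hsdef
  have hs0 : 0 ≤ s := Real.sqrt_nonneg _
  have hs2 : s ^ 2 = 1 - 4 * b := Real.sq_sqrt (by linarith)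
  have hs1 : s ≤ 1 := by nlinarith
  set x := (1 - s) / 2 with hxdef
  have hx0 : 0 ≤ x := by rw [hxdef]; linarith
  have hxhalf : x ≤ 1 / 2 := by rw [hxdef]; linarith
  have hxfix : b + x ^ 2 = x := by rw [hxdef]; nlinarith [hs2]
  have hx2b : x ≤ 2 * b := by
    -- 1 - 4b = s^2 ≤ s since 0 ≤ s ≤ 1
    have : s ^ 2 ≤ s := by nlinarith
    rw [hxdef]; nlinarith [hs2]
  have hC3 : (3 : ℝ) ≤ 3 + 2 * a0 / (1 - 2 * a0) := by
    have : 0 ≤ 2 * a0 / (1 - 2 * a0) := div_nonneg (by linarith) ht.le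
    linarith
  rcases le_or_gt a0 x with hcase | hcase
  · -- Case A : a0 ≤ x*, then u_k ≤ x* ≤ 2b for all k
    have hux : ∀ k, useq a0 b k ≤ x := by
      intro k
      induction k with
      | zero => exact hcase
      | succ n ih =>
        have hun : 0 ≤ useq a0 b n := useq_nonneg a0 b ha0 hb0.le n
        have : (useq a0 b n) ^ 2 ≤ x ^ 2 := pow_le_pow_left₀ hun ih 2
        simp only [useq]
        linarith
    intro k
    have h1 : useq a0 b k ≤ 2 * b := le_trans (hux k) hx2b
    have h2 : 0 ≤ a0 ^ (2 ^ k) := pow_nonneg ha0 _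
    nlinarith
  · -- Case B : x* < a0, then u_k ≤ a0 for all k, and geometric control
    have hfa : b + a0 ^ 2 ≤ a0 := by
      have hprod : 0 ≤ (a0 - x) * (1 - a0 - x) :=
        mul_nonneg (by linarith) (by linarith)
      nlinarith [hxfix]
    have hua : ∀ k, useq a0 b k ≤ a0 := by
      intro k
      induction k with
      | zero => exact le_refl a0
      | succ n ih =>
        have hun : 0 ≤ useq a0 b n := useq_nonneg a0 b ha0 hb0.le n
        have : (useq a0 b n) ^ 2 ≤ a0 ^ 2 := pow_le_pow_left₀ hun ih 2
        simp only [useq]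
        linarith
    have key : ∀ k, useq a0 b k ≤ a0 ^ (2 ^ k) + b / (1 - 2 * a0) := by
      intro k
      induction k with
      | zero =>
        have : 0 ≤ b / (1 - 2 * a0) := div_nonneg hb0.le ht.le
        simp only [useq, pow_zero, pow_one]
        linarith
      | succ n ih =>
        have hP : a0 ^ (2 ^ n) ≤ a0 :=
          pow_le_of_le_one ha0 (by linarith) (Nat.two_pow_pos n).ne'
        have hlow : a0 ^ (2 ^ n) ≤ useq a0 b n := useq_lower a0 b ha0 hb0.le n
        have hup : useq a0 b n ≤ a0 := hua n
        have hd : useq a0 b n - a0 ^ (2 ^ n) ≤ b / (1 - 2 * a0) := by linarith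
        have hPn : 0 ≤ a0 ^ (2 ^ n) := pow_nonneg ha0 _
        have hun : 0 ≤ useq a0 b n := useq_nonneg a0 b ha0 hb0.le n
        have hsum : useq a0 b n + a0 ^ (2 ^ n) ≤ 2 * a0 := by linarith
        have hmul : (useq a0 b n - a0 ^ (2 ^ n)) * (useq a0 b n + a0 ^ (2 ^ n)) ≤
            (b / (1 - 2 * a0)) * (2 * a0) := by
          apply mul_le_mul hd hsum (by linarith) (div_nonneg hb0.le ht.le)
        have hgeo : b + (b / (1 - 2 * a0)) * (2 * a0) = b / (1 - 2 * a0) := by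
          field_simp
          ring
        have hpow : a0 ^ (2 ^ (n + 1)) = (a0 ^ (2 ^ n)) ^ 2 := by
          rw [← pow_mul, pow_succ]
        simp only [useq]
        nlinarith [hmul]
    intro k
    have h1 := key k
    have h2 : b / (1 - 2 * a0) ≤ (3 + 2 * a0 / (1 - 2 * a0)) * b := by
      have : (3 + 2 * a0 / (1 - 2 * a0)) * b - b / (1 - 2 * a0) = 2 * b := by
        field_simp
        ring
      linarith
    linarith

theorem eigenvalue_final_estimate (e : ℕ → ℝ) (c4 c5 h : ℝ)
    (he : ∀ k, 0 ≤ e k) (hc4 : 0 < c4) (hc5 : 0 < c5) (hh : 0 < h)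
    (hrec : ∀ k, c4 * e (k + 1) ≤ c5 * h ^ 2 + (c4 * e k) ^ 2)
    (h0 : c4 * e 0 < 1 / 2) (hb : c5 * h ^ 2 < 1 / 4) :
    ∀ k, c4 * e k ≤ (c4 * e 0) ^ (2 ^ k) +
      c5 * (3 + (2 * c4 * e 0) / (1 - 2 * c4 * e 0)) * h ^ 2 := by
  have ha0 : 0 ≤ c4 * e 0 := mul_nonneg hc4.le (he 0)
  have hb0 : 0 < c5 * h ^ 2 := by positivity
  have hle : ∀ k, c4 * e k ≤ useq (c4 * e 0) (c5 * h ^ 2) k := by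
    intro k
    induction k with
    | zero => simp [useq]
    | succ n ih =>
      have h1 : (c4 * e n) ^ 2 ≤ (useq (c4 * e 0) (c5 * h ^ 2) n) ^ 2 :=
        pow_le_pow_left₀ (mul_nonneg hc4.le (he n)) ih 2
      calc c4 * e (n + 1) ≤ c5 * h ^ 2 + (c4 * e n) ^ 2 := hrec n
        _ ≤ c5 * h ^ 2 + (useq (c4 * e 0) (c5 * h ^ 2) n) ^ 2 := by linarith
        _ = useq (c4 * e 0) (c5 * h ^ 2) (n + 1) := rfl
  intro k
  have hbound := useq_bound (c4 * e 0) (c5 * h ^ 2) ha0 hb0 h0 hb k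
  have heq : c5 * (3 + (2 * c4 * e 0) / (1 - 2 * c4 * e 0)) * h ^ 2 =
      (3 + 2 * (c4 * e 0) / (1 - 2 * (c4 * e 0))) * (c5 * h ^ 2) := by ring
  rw [heq]
  exact le_trans (hle k) hbound
end
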